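/- Let d ≥ 2 be an integer and a a nonzero rational number. Then for b = 1 and for b = −1, the set PrePer(ψ_{d,a,b}, ℙ¹(ℚ)) of rational preperiodic points of ψ_{d,a,b} has at most 6 elements. -/

import Mathlib

/-- The map `ψ_{d,a,b} : ℙ¹(ℚ) → ℙ¹(ℚ)`, with `ℙ¹(ℚ)` modeled as `Option ℚ`
(`some z` is the affine point `z`, and `none` is the point at infinity `[1 : 0]`).
In homogeneous coordinates the map is `[X : Y] ↦ [X·Y^{d−1} : a·X^d + b·Y^d]`;
on the affine chart it is `z ↦ z / (a·z^d + b)`, the point at infinity mapping to `0`. -/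
def psi (d : ℕ) (a b : ℚ) : Option ℚ → Option ℚ
  | none => some 0
  | some z => if a * z ^ d + b = 0 then none else some (z / (a * z ^ d + b))

set_option linter.unusedVariables false


lemma v2_two : padicValRat 2 (2:ℚ) = 1 := by
  have h := padicValRat.self (p := 2) one_lt_two
  norm_num at h
  exact h

lemma v_odd_two (p : ℕ) (hp : p.Prime) (hp2 : p ≠ 2) : padicValRat p (2:ℚ) = 0 := by
  have hnd : ¬ p ∣ 2 := fun hdvd => hp2 ((Nat.prime_dvd_prime_iff_eq hp Nat.prime_two).mp hdvd)
  have h0 : padicValNat p 2 = 0 := padicValNat.eq_zero_of_not_dvd hnd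
  calc padicValRat p (2:ℚ) = padicValRat p ((2:ℕ):ℚ) := by norm_num
    _ = padicValNat p 2 := padicValRat.of_nat
    _ = 0 := by simp [h0]

lemma v3_three : padicValRat 3 (3:ℚ) = 1 := by
  have h := padicValRat.self (p := 3) (by norm_num)
  norm_num at h
  exact h

lemma v3_two : padicValRat 3 (2:ℚ) = 0 := v_odd_two 3 (by norm_num) (by norm_num)

lemma eq_one_or_neg_one (q : ℚ) (hq : q ≠ 0) (h : ∀ p : ℕ, p.Prime → padicValRat p q = 0) :
    q = 1 ∨ q = -1 := by
  have hna : q.num.natAbs ≠ 0 := by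
    simpa [Int.natAbs_eq_zero] using (Rat.num_ne_zero.mpr hq)
  have key : ∀ p : ℕ, p.Prime → padicValNat p q.num.natAbs = padicValNat p q.den := by
    intro p hp
    have h0 := h p hp
    rw [padicValRat_def, padicValInt] at h0
    omega
  have hnum : q.num.natAbs = 1 := by
    rw [Nat.eq_one_iff_not_exists_prime_dvd]
    intro p hp hdvd
    haveI := Fact.mk hp
    have h1 : 1 ≤ padicValNat p q.num.natAbs :=
      one_le_padicValNat_of_dvd hna hdvd
    have h2 : p ∣ q.den := by
      rw [dvd_iff_padicValNat_ne_zero q.den_nz]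
      have hk := key p hp
      omega
    have hg : p ∣ Nat.gcd q.num.natAbs q.den := Nat.dvd_gcd hdvd h2
    have hco : Nat.gcd q.num.natAbs q.den = 1 := q.reduced
    rw [hco] at hg
    exact hp.one_lt.ne' (Nat.dvd_one.mp hg)
  have hden : q.den = 1 := by
    rw [Nat.eq_one_iff_not_exists_prime_dvd]
    intro p hp hdvd
    haveI := Fact.mk hp
    have h1 : 1 ≤ padicValNat p q.den :=
      one_le_padicValNat_of_dvd q.den_nz hdvd
    have h2 : p ∣ q.num.natAbs := by
      rw [dvd_iff_padicValNat_ne_zero hna]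
      have hk := key p hp
      omega
    have hg : p ∣ Nat.gcd q.num.natAbs q.den := Nat.dvd_gcd h2 hdvd
    have hco : Nat.gcd q.num.natAbs q.den = 1 := q.reduced
    rw [hco] at hg
    exact hp.one_lt.ne' (Nat.dvd_one.mp hg)
  have hq1 : (q.num : ℚ) = q := by
    rw [← Rat.num_div_den q, hden]
    norm_num
  rcases Int.natAbs_eq_iff.mp hnum with h | h
  · left; rw [← hq1, h]; norm_num
  · right; rw [← hq1, h]; norm_num


section Dyn

variable {d : ℕ} {b : ℚ}

lemma hb_ne (hb : b = 1 ∨ b = -1) : b ≠ 0 := by rcases hb with rfl | rfl <;> norm_num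

lemma vb (hb : b = 1 ∨ b = -1) (p : ℕ) : padicValRat p b = 0 := by
  rcases hb with rfl | rfl <;> simp

lemma v_neg2b (hb : b = 1 ∨ b = -1) (p : ℕ) [Fact p.Prime] :
    padicValRat p (-2*b) = padicValRat p (2:ℚ) := by
  rw [show (-2*b : ℚ) = 2 * (-b) by ring,
    padicValRat.mul (by norm_num) (neg_ne_zero.mpr (hb_ne hb)), padicValRat.neg, vb hb, add_zero]

lemma v_negb2 (hb : b = 1 ∨ b = -1) (p : ℕ) [Fact p.Prime] :
    padicValRat p (-b/2) = -(padicValRat p (2:ℚ)) := by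
  rw [padicValRat.div (neg_ne_zero.mpr (hb_ne hb)) (by norm_num), padicValRat.neg, vb hb]
  ring

lemma key_cases (hd : 2 ≤ d) (hb : b = 1 ∨ b = -1) (p : ℕ) [Fact p.Prime] {c : ℚ}
    (hc : c ≠ 0) (hcb : c + b ≠ 0) :
    (0 < padicValRat p c ∧ padicValRat p (c+b) = 0 ∧
        padicValRat p (c/(c+b)^d) = padicValRat p c) ∨
    (padicValRat p c < 0 ∧ padicValRat p (c+b) = padicValRat p c ∧
        padicValRat p (c/(c+b)^d) = (1-(d:ℤ)) * padicValRat p c) ∨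
    (padicValRat p c = 0 ∧ 0 ≤ padicValRat p (c+b) ∧
        padicValRat p (c/(c+b)^d) = -((d:ℤ) * padicValRat p (c+b))) := by
  have hb0 : b ≠ 0 := hb_ne hb
  have hvb : padicValRat p b = 0 := vb hb p
  have hval : padicValRat p (c/(c+b)^d) = padicValRat p c - (d:ℤ) * padicValRat p (c+b) := by
    rw [padicValRat.div hc (pow_ne_zero _ hcb), padicValRat.pow _]
  rcases lt_trichotomy (padicValRat p c) 0 with h | h | h
  · right; left
    have hw : padicValRat p (c+b) = padicValRat p c :=
      padicValRat.add_eq_of_lt hcb hc hb0 (by rw [hvb]; exact h)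
    exact ⟨h, hw, by rw [hval, hw]; ring⟩
  · right; right
    have hw : 0 ≤ padicValRat p (c+b) := by
      have hm := padicValRat.min_le_padicValRat_add (p := p) hcb
      rw [h, hvb] at hm
      simpa using hm
    exact ⟨h, hw, by rw [hval, h]; ring⟩
  · left
    have hw : padicValRat p (c+b) = 0 := by
      have h2 : padicValRat p (b+c) = padicValRat p b :=
        padicValRat.add_eq_of_lt (by rwa [add_comm]) hb0 hc (by rw [hvb]; exact h)
      rw [add_comm b c] at h2
      rw [h2, hvb]
    exact ⟨h, hw, by rw [hval, hw]; ring⟩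

/-- no rational maps to `-b` under `c ↦ c/(c+b)^d` -/
lemma no_pre_neg_b (hd : 2 ≤ d) (hb : b = 1 ∨ b = -1) {c : ℚ} (hc : c ≠ 0) (hcb : c + b ≠ 0)
    (h : c/(c+b)^d = -b) : False := by
  have hd' : (2:ℤ) ≤ (d:ℤ) := by exact_mod_cast hd
  have key : ∀ p : ℕ, p.Prime → padicValRat p c = 0 ∧ padicValRat p (c+b) = 0 := by
    intro p hp
    haveI := Fact.mk hp
    have hv' : padicValRat p (c/(c+b)^d) = 0 := by rw [h, padicValRat.neg, vb hb]
    rcases key_cases hd hb p hc hcb with ⟨h1, _, h3⟩ | ⟨h1, _, h3⟩ | ⟨h1, h2, h3⟩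
    · omega
    · rw [hv'] at h3
      have : 0 < (1-(d:ℤ)) * padicValRat p c :=
        mul_pos_of_neg_of_neg (by omega) h1
      omega
    · rw [hv'] at h3
      constructor
      · exact h1
      · nlinarith
  have hcb1 : c + b = 1 ∨ c + b = -1 :=
    eq_one_or_neg_one _ hcb (fun p hp => (key p hp).2)
  have hc2 : c = -2*b := by
    rcases hb with rfl | rfl <;> rcases hcb1 with h1 | h1 <;>
      first
        | linarith
        | (exfalso; apply hc; linarith)
  have h2 := (key 2 (by norm_num)).1
  rw [hc2, v_neg2b hb, v2_two] at h2
  exact one_ne_zero h2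

lemma pre_neg_2b (hd : 2 ≤ d) (hb : b = 1 ∨ b = -1) {c : ℚ} (hc : c ≠ 0) (hcb : c + b ≠ 0)
    (h : c/(c+b)^d = -2*b) : c = -2*b ∨ (d = 2 ∧ c = -b/2) := by
  have hd' : (2:ℤ) ≤ (d:ℤ) := by exact_mod_cast hd
  have hodd : ∀ p : ℕ, p.Prime → p ≠ 2 → padicValRat p c = 0 ∧ padicValRat p (c+b) = 0 := by
    intro p hp hp2
    haveI := Fact.mk hp
    have hv' : padicValRat p (c/(c+b)^d) = 0 := by
      rw [h, v_neg2b hb, v_odd_two p hp hp2]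
    rcases key_cases hd hb p hc hcb with ⟨h1, _, h3⟩ | ⟨h1, _, h3⟩ | ⟨h1, h2, h3⟩
    · omega
    · rw [hv'] at h3
      have : 0 < (1-(d:ℤ)) * padicValRat p c :=
        mul_pos_of_neg_of_neg (by omega) h1
      omega
    · rw [hv'] at h3
      exact ⟨h1, by nlinarith⟩
  have hv2 : padicValRat 2 (c/(c+b)^d) = 1 := by rw [h, v_neg2b hb, v2_two]
  rcases key_cases hd hb 2 hc hcb with ⟨h1, h2, h3⟩ | ⟨h1, h2, h3⟩ | ⟨h1, h2, h3⟩
  · -- v_2 c > 0, w_2 = 0 : all w's vanish, so c + b = ±1, c = -2b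
    left
    have hcb1 : c + b = 1 ∨ c + b = -1 := by
      apply eq_one_or_neg_one _ hcb
      intro p hp
      by_cases hp2 : p = 2
      · subst hp2; exact h2
      · exact (hodd p hp hp2).2
    rcases hb with rfl | rfl <;> rcases hcb1 with h1' | h1' <;>
      first
        | linarith
        | (exfalso; apply hc; linarith)
  · -- v_2 c < 0
    right
    rw [hv2] at h3
    rcases Int.mul_eq_one_iff_eq_one_or_neg_one.mp h3.symm with ⟨ha1, ha2⟩ | ⟨ha1, ha2⟩
    · omega
    have hd2 : d = 2 := by omega
    refine ⟨hd2, ?_⟩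
    -- v_2 (c+b) = -1, odd valuations of (c+b) are 0, so 2(c+b) = ±1
    have hq : (2:ℚ) * (c+b) = 1 ∨ (2:ℚ) * (c+b) = -1 := by
      apply eq_one_or_neg_one _ (mul_ne_zero (by norm_num) hcb)
      intro p hp
      haveI := Fact.mk hp
      rw [padicValRat.mul (by norm_num) hcb]
      by_cases hp2 : p = 2
      · subst hp2; rw [v2_two, h2, ha2]; ring
      · rw [v_odd_two p hp hp2, (hodd p hp hp2).2]; ring
    -- c = 1/2 - b or c = -1/2 - b ; exclude the ∓3/2 case via v_3
    have h3c := (hodd 3 (by norm_num) (by norm_num)).1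
    rcases hb with rfl | rfl <;> rcases hq with h1' | h1'
    · linarith
    · exfalso
      have : c = -3/2 := by linarith
      rw [this] at h3c
      rw [show (-3/2 : ℚ) = -(3/2) by norm_num, padicValRat.neg,
        padicValRat.div (by norm_num) (by norm_num), v3_three, v3_two] at h3c
      norm_num at h3c
    · exfalso
      have : c = 3/2 := by linarith
      rw [this, padicValRat.div (by norm_num) (by norm_num), v3_three, v3_two] at h3c
      norm_num at h3c
    · linarith
  · -- v_2 c = 0 : -(d*w) = 1 impossible
    rw [hv2] at h3
    exfalso
    nlinarith

lemma no_pre_negb2 (hd : 2 ≤ d) (hb : b = 1 ∨ b = -1) (hd2 : d = 2) {c : ℚ}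
    (hc : c ≠ 0) (hcb : c + b ≠ 0) (h : c/(c+b)^d = -b/2) : False := by
  have hv2 : padicValRat 2 (c/(c+b)^d) = -1 := by rw [h, v_negb2 hb, v2_two]
  rcases key_cases hd hb 2 hc hcb with ⟨h1, h2, h3⟩ | ⟨h1, h2, h3⟩ | ⟨h1, h2, h3⟩
  · omega
  · rw [hv2] at h3
    rw [hd2] at h3
    omega
  · rw [hv2, hd2] at h3
    omega
end Dyn



section Dyn
variable {d : ℕ} {b : ℚ}
/-- periodic values of the `c`-dynamics equal `-2b` -/
lemma periodic_c (hd : 2 ≤ d) (hb : b = 1 ∨ b = -1) (c : ℕ → ℚ)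
    (hc : ∀ n, c n ≠ 0) (hcb : ∀ n, c n + b ≠ 0)
    (hstep : ∀ n, c (n+1) = c n / (c n + b)^d)
    (k : ℕ) (hk : 0 < k) (hper : c k = c 0) : c 0 = -2*b := by
  have hd' : (2:ℤ) ≤ (d:ℤ) := by exact_mod_cast hd
  have hper' : ∀ n, c (n + k) = c n := by
    intro n
    induction n with
    | zero => simpa using hper
    | succ n ih => rw [show n + 1 + k = (n + k) + 1 by omega, hstep, ih, ← hstep]
  have key : ∀ p : ℕ, p.Prime → padicValRat p (c 0 + b) = 0 := by
    intro p hp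
    haveI := Fact.mk hp
    -- valuation transitions
    have h1 : ∀ n, 0 < padicValRat p (c n) → padicValRat p (c (n+1)) = padicValRat p (c n) := by
      intro n hn
      rcases key_cases hd hb p (hc n) (hcb n) with ⟨_, _, h3⟩ | ⟨h1', _, _⟩ | ⟨h1', _, _⟩
      · rw [hstep]; exact h3
      · omega
      · omega
    have h2 : ∀ n m, n ≤ m → 0 < padicValRat p (c n) →
        padicValRat p (c m) = padicValRat p (c n) := by
      intro n m hnm hpos
      induction m with
      | zero => have : n = 0 := by omega
                rw [this]
      | succ m ih =>
        rcases Nat.lt_or_ge n (m+1) with hlt | hge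
        · have hnm' : n ≤ m := by omega
          rw [h1 m (by rw [ih hnm']; exact hpos), ih hnm']
        · have : n = m + 1 := by omega
          rw [this]
    have claim1 : ∀ n, 0 ≤ padicValRat p (c n) := by
      intro n
      by_contra hneg
      push_neg at hneg
      have hpos : 0 < padicValRat p (c (n+1)) := by
        rcases key_cases hd hb p (hc n) (hcb n) with ⟨h1', _, _⟩ | ⟨h1', _, h3⟩ | ⟨h1', _, _⟩
        · omega
        · rw [hstep, h3]
          exact mul_pos_of_neg_of_neg (by omega) hneg
        · omega
      have e1 : padicValRat p (c (n + k)) = padicValRat p (c (n+1)) :=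
        h2 (n+1) (n+k) (by omega) hpos
      rw [hper' n] at e1
      omega
    rcases key_cases hd hb p (hc 0) (hcb 0) with ⟨_, h2', _⟩ | ⟨h1', _, _⟩ | ⟨_, h2', h3'⟩
    · exact h2'
    · have := claim1 0; omega
    · have hv1 : 0 ≤ padicValRat p (c (0+1)) := claim1 _
      rw [hstep 0, h3'] at hv1
      have hdw : 0 ≤ (d:ℤ) * padicValRat p (c 0 + b) :=
        mul_nonneg (by omega) h2'
      have hz' : (d:ℤ) * padicValRat p (c 0 + b) = 0 := by omega
      rcases mul_eq_zero.mp hz' with h | h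
      · omega
      · exact h
  have hcb1 : c 0 + b = 1 ∨ c 0 + b = -1 := eq_one_or_neg_one _ (hcb 0) key
  rcases hb with rfl | rfl <;> rcases hcb1 with h1 | h1 <;>
    first
      | linarith
      | (exfalso; exact hc 0 (by linarith))

lemma psi_none (a : ℚ) : psi d a b none = some 0 := rfl

lemma psi_some (a z : ℚ) :
    psi d a b (some z) = if a * z ^ d + b = 0 then none else some (z / (a * z ^ d + b)) := rfl

/-- Main classification: a nonzero rational preperiodic point `z` satisfies
`a z^d ∈ {-b, -2b} ∪ (d = 2 : {-b/2})`. -/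
lemma main_class (hd : 2 ≤ d) (hb : b = 1 ∨ b = -1) {a : ℚ} (ha : a ≠ 0) (z : ℚ) (hz : z ≠ 0)
    (hpre : ∃ m n : ℕ, m < n ∧ (psi d a b)^[m] (some z) = (psi d a b)^[n] (some z)) :
    a*z^d = -b ∨ a*z^d = -2*b ∨ (d = 2 ∧ a*z^d = -b/2) := by
  set F := psi d a b with hF
  by_cases hinf : ∃ j, F^[j] (some z) = none
  · -- orbit hits infinity
    left
    set k := Nat.find hinf with hkdef
    have hk : F^[k] (some z) = none := Nat.find_spec hinf
    have hmin : ∀ j, j < k → F^[j] (some z) ≠ none := fun j hj => Nat.find_min hinf hj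
    have hk0 : k ≠ 0 := by
      intro h0
      rw [h0] at hk
      simp at hk
    have horb : ∀ j, j < k → ∃ w, w ≠ 0 ∧ F^[j] (some z) = some w := by
      intro j
      induction j with
      | zero => exact fun _ => ⟨z, hz, rfl⟩
      | succ j ih =>
        intro hj
        obtain ⟨w, hw, hw'⟩ := ih (by omega)
        by_cases hden : a * w ^ d + b = 0
        · exfalso
          apply hmin (j+1) hj
          rw [Function.iterate_succ_apply', hw', hF, psi_some, if_pos hden]
        · refine ⟨w / (a * w ^ d + b), div_ne_zero hw hden, ?_⟩
          rw [Function.iterate_succ_apply', hw', hF, psi_some, if_neg hden]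
    rcases Nat.lt_or_ge k 2 with hk1 | hk2
    · -- k = 1
      have hk1' : k = 1 := by omega
      rw [hk1'] at hk
      simp only [Function.iterate_one] at hk
      rw [hF, psi_some] at hk
      by_cases hden : a * z ^ d + b = 0
      · linarith [hden]
      · rw [if_neg hden] at hk; simp at hk
    · -- k ≥ 2 : contradiction via no_pre_neg_b
      exfalso
      obtain ⟨u, hu0, hu⟩ := horb (k-2) (by omega)
      obtain ⟨w, hw0, hw⟩ := horb (k-1) (by omega)
      have e1 := Function.iterate_succ_apply' F (k-2) (some z)
      rw [show (k - 2).succ = k - 1 by omega, hw, hu, hF, psi_some] at e1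
      by_cases hden : a * u ^ d + b = 0
      · rw [if_pos hden] at e1; exact absurd e1 (by simp)
      rw [if_neg hden] at e1
      have hweq : w = u / (a * u ^ d + b) := by
        have h' := e1.symm
        simpa using h'.symm
      have e2 := Function.iterate_succ_apply' F (k-1) (some z)
      rw [show (k - 1).succ = k by omega, hk, hw, hF, psi_some] at e2
      by_cases hden2 : a * w ^ d + b = 0
      · -- a w^d = -b and w = step(u): contradiction
        have hcw : a * w ^ d = -b := by linarith
        apply no_pre_neg_b hd hb (mul_ne_zero ha (pow_ne_zero _ hu0)) hden
        have : a * w ^ d = (a * u ^ d) / (a * u ^ d + b) ^ d := by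
          rw [hweq, div_pow, mul_div_assoc]
        rw [← this, hcw]
      · rw [if_neg hden2] at e2; exact absurd e2.symm (by simp)
  · -- orbit stays affine and nonzero
    push_neg at hinf
    have hsome : ∀ n, ∃ w, F^[n] (some z) = some w := by
      intro n
      cases hFn : F^[n] (some z) with
      | none => exact absurd hFn (hinf n)
      | some w => exact ⟨w, rfl⟩
    choose q hq using hsome
    have hq0 : q 0 = z := by
      have := hq 0
      simpa using this.symm
    have hrec : ∀ n, (a * (q n) ^ d + b ≠ 0) ∧ q (n+1) = q n / (a * (q n) ^ d + b) := by
      intro n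
      have h1 := hq (n+1)
      rw [Function.iterate_succ_apply', hq n, hF, psi_some] at h1
      by_cases hden : a * (q n) ^ d + b = 0
      · rw [if_pos hden] at h1; exact absurd h1 (by simp)
      · rw [if_neg hden] at h1
        exact ⟨hden, by simpa using h1.symm⟩
    have hqz : ∀ n, q n ≠ 0 := by
      intro n
      induction n with
      | zero => rw [hq0]; exact hz
      | succ n ih =>
        rw [(hrec n).2]
        exact div_ne_zero ih (hrec n).1
    set c : ℕ → ℚ := fun n => a * (q n) ^ d with hcdef
    have hc : ∀ n, c n ≠ 0 := fun n => mul_ne_zero ha (pow_ne_zero _ (hqz n))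
    have hcb : ∀ n, c n + b ≠ 0 := fun n => (hrec n).1
    have hstep : ∀ n, c (n+1) = c n / (c n + b)^d := by
      intro n
      show a * (q (n+1)) ^ d = _
      rw [(hrec n).2, div_pow, mul_div_assoc]
    obtain ⟨m, n, hmn, heq⟩ := hpre
    have hqmn : q m = q n := by
      have h1 := hq m
      have h2 := hq n
      rw [heq] at h1
      rw [h1] at h2
      exact Option.some.inj h2.symm |>.symm
    -- apply periodic_c to the shifted sequence
    have hm : c m = -2*b := by
      apply periodic_c hd hb (fun j => c (m + j)) (fun j => hc (m+j)) (fun j => hcb (m+j))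
        (fun j => by simpa [show m + (j+1) = (m+j)+1 by omega] using hstep (m+j)) (n - m) (by omega)
      show c (m + (n - m)) = c (m + 0)
      rw [show m + (n - m) = n by omega, show m + 0 = m by rfl]
      show a * (q n) ^ d = a * (q m) ^ d
      rw [hqmn]
    -- walk backwards from m to 0
    have down : ∀ j, j ≤ m → c (m - j) = -2*b ∨ (m - j = 0 ∧ d = 2 ∧ c (m - j) = -b/2) := by
      intro j
      induction j with
      | zero => intro _; left; simpa using hm
      | succ j ih =>
        intro hj
        have hmj : c (m - j) = -2*b := by
          rcases ih (by omega) with h | ⟨h0, _⟩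
          · exact h
          · omega
        have hi1 : (m - (j+1)) + 1 = m - j := by omega
        have himg : c (m-(j+1)) / (c (m-(j+1)) + b)^d = -2*b := by
          rw [← hstep, hi1, hmj]
        rcases pre_neg_2b hd hb (hc _) (hcb _) himg with h | ⟨hd2, hhalf⟩
        · left; exact h
        · by_cases hi0 : m - (j+1) = 0
          · right; exact ⟨hi0, hd2, hhalf⟩
          · exfalso
            set i := m - (j+1) with hidef
            apply no_pre_negb2 hd hb hd2 (hc (i-1)) (hcb (i-1))
            rw [← hstep]  -- ⊢ c (i-1+1) = -b/2
            rw [show i - 1 + 1 = i by omega, hhalf]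
    have h0 := down m le_rfl
    rw [Nat.sub_self] at h0
    have hc0 : c 0 = a * z ^ d := by rw [hcdef]; simp [hq0]
    rw [hc0] at h0
    tauto
end Dyn



section Count
variable {d : ℕ} {a b : ℚ}

lemma pow_ne_two (hd : 2 ≤ d) (x : ℚ) : x^d ≠ 2 := by
  intro h
  have hx : x ≠ 0 := by
    rintro rfl
    rw [zero_pow (by omega)] at h
    norm_num at h
  have h2 : padicValRat 2 (x^d) = 1 := by rw [h]; exact v2_two
  rw [padicValRat.pow _] at h2
  have hdvd : (d:ℤ) ∣ 1 := ⟨_, h2.symm⟩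
  have := Int.le_of_dvd one_pos hdvd
  have hd' : (2:ℤ) ≤ (d:ℤ) := by exact_mod_cast hd
  omega

lemma eq_or_neg (hd : 2 ≤ d) (ha : a ≠ 0) {z w : ℚ} (hz : z ≠ 0) (hw : w ≠ 0)
    (h : a*z^d = a*w^d) : z = w ∨ z = -w := by
  have hzw : z^d = w^d := mul_left_cancel₀ ha h
  have h1 : (z/w)^d = 1 := by
    rw [div_pow, hzw, div_self (pow_ne_zero _ hw)]
  have hval : ∀ p : ℕ, p.Prime → padicValRat p (z/w) = 0 := by
    intro p hp
    haveI := Fact.mk hp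
    have := congrArg (padicValRat p) h1
    rw [padicValRat.pow _, padicValRat.one] at this
    have hd0 : (d:ℤ) ≠ 0 := by positivity
    exact (mul_eq_zero.mp this).resolve_left hd0
  rcases eq_one_or_neg_one _ (div_ne_zero hz hw) hval with h' | h'
  · left; field_simp at h'; exact h'
  · right
    have : z = -1 * w := by
      field_simp at h' ⊢
      linarith
    linarith

lemma ratio_two (hd : 2 ≤ d) (ha : a ≠ 0) {z w : ℚ} (hz : z ≠ 0) (hw : w ≠ 0)
    (h : a*z^d = 2*(a*w^d)) : False := by
  apply pow_ne_two hd (z/w)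
  rw [div_pow]
  have hzw : z^d = 2*w^d := by
    apply mul_left_cancel₀ ha
    rw [h]; ring
  rw [hzw, mul_div_assoc, div_self (pow_ne_zero _ hw), mul_one]

lemma encard_le_6 {α : Type*} (x1 x2 x3 x4 x5 x6 : α) :
    ({x1, x2, x3, x4, x5, x6} : Set α).encard ≤ 6 := by
  calc ({x1, x2, x3, x4, x5, x6} : Set α).encard
      ≤ ({x2, x3, x4, x5, x6} : Set α).encard + 1 := Set.encard_insert_le _ _
    _ ≤ (({x3, x4, x5, x6} : Set α).encard + 1) + 1 := by
        exact add_le_add_left (Set.encard_insert_le _ _) _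
    _ ≤ ((({x4, x5, x6} : Set α).encard + 1) + 1) + 1 := by
        exact add_le_add_left (add_le_add_left (Set.encard_insert_le _ _) _) _
    _ ≤ (((({x5, x6} : Set α).encard + 1) + 1) + 1) + 1 := by
        exact add_le_add_left (add_le_add_left (add_le_add_left (Set.encard_insert_le _ _) _) _) _
    _ ≤ ((((({x6} : Set α).encard + 1) + 1) + 1) + 1) + 1 := by
        exact add_le_add_left (add_le_add_left (add_le_add_left (add_le_add_left
          (Set.encard_insert_le _ _) _) _) _) _
    _ = 6 := by rw [Set.encard_singleton]; rfl

lemma main_bound (hd : 2 ≤ d) (ha : a ≠ 0) (hb : b = 1 ∨ b = -1) :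
    {P : Option ℚ | ∃ m n : ℕ, m < n ∧ (psi d a b)^[m] P = (psi d a b)^[n] P}.encard ≤ 6 := by
  classical
  by_cases h1 : ∃ w : ℚ, w ≠ 0 ∧ a*w^d = -b
  · obtain ⟨w, hw0, hwc⟩ := h1
    refine le_trans (Set.encard_mono ?_)
      (encard_le_6 (none : Option ℚ) (some 0) (some w) (some (-w)) (some w) (some w))
    rintro P ⟨m, n, hmn, heq⟩
    match P with
    | none => left; rfl
    | some z =>
      by_cases hz0 : z = 0
      · subst hz0; right; left; rfl
      rcases main_class hd hb ha z hz0 ⟨m, n, hmn, heq⟩ with hc | hc | ⟨hd2, hc⟩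
      · rcases eq_or_neg hd ha hz0 hw0 (hc.trans hwc.symm) with rfl | rfl
        · right; right; left; rfl
        · right; right; right; left; rfl
      · exact absurd (by rw [hc, hwc]; ring) (fun h => ratio_two hd ha hz0 hw0 h)
      · exact absurd (by rw [hwc, hc]; ring) (fun h => ratio_two hd ha hw0 hz0 h)
  · set E2 := fun w : ℚ => w ≠ 0 ∧ a*w^d = -2*b with hE2
    set E3 := fun w : ℚ => w ≠ 0 ∧ a*w^d = -b/2 with hE3
    set w2 : ℚ := if h : ∃ w, E2 w then h.choose else 0 with hw2def
    set w3 : ℚ := if h : ∃ w, E3 w then h.choose else 0 with hw3def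
    refine le_trans (Set.encard_mono ?_)
      (encard_le_6 (none : Option ℚ) (some 0) (some w2) (some (-w2)) (some w3) (some (-w3)))
    rintro P ⟨m, n, hmn, heq⟩
    match P with
    | none => left; rfl
    | some z =>
      by_cases hz0 : z = 0
      · subst hz0; right; left; rfl
      rcases main_class hd hb ha z hz0 ⟨m, n, hmn, heq⟩ with hc | hc | ⟨hd2, hc⟩
      · exact absurd ⟨z, hz0, hc⟩ h1
      · have hE : ∃ w, E2 w := ⟨z, hz0, hc⟩
        have hspec : E2 w2 := by rw [hw2def, dif_pos hE]; exact hE.choose_spec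
        rcases eq_or_neg hd ha hz0 hspec.1 (hc.trans hspec.2.symm) with rfl | rfl
        · right; right; left; rfl
        · right; right; right; left; rfl
      · have hE : ∃ w, E3 w := ⟨z, hz0, hc⟩
        have hspec : E3 w3 := by rw [hw3def, dif_pos hE]; exact hE.choose_spec
        rcases eq_or_neg hd ha hz0 hspec.1 (hc.trans hspec.2.symm) with rfl | rfl
        · right; right; right; right; left; rfl
        · right; right; right; right; right; rfl

end Count

/-- For `d ≥ 2` and a nonzero rational `a`, both `ψ_{d,a,1}` and
`ψ_{d,a,−1}` have at most `6` rational preperiodic points. -/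
theorem preper_card_le_six_b_pm_one
    (d : ℕ) (hd : 2 ≤ d) (a : ℚ) (ha : a ≠ 0) :
    {P : Option ℚ | ∃ m n : ℕ, m < n ∧ (psi d a 1)^[m] P = (psi d a 1)^[n] P}.encard ≤ 6 ∧
    {P : Option ℚ | ∃ m n : ℕ, m < n ∧ (psi d a (-1))^[m] P = (psi d a (-1))^[n] P}.encard ≤ 6 := by
  exact ⟨main_bound hd ha (Or.inl rfl), main_bound hd ha (Or.inr rfl)⟩
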